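/- Let K ⊆ ℝ^d be a convex body that is centrally symmetric about an integer point. Then vol(K) ≤ 2^d · |K ∩ ℤ^d|. -/

import Mathlib

/-- Coercion of an integer point to a real point. -/
def toR {d : ℕ} (z : Fin d → ℤ) : Fin d → ℝ := fun i => (z i : ℝ)

open MeasureTheory Set
open scoped Pointwise


/-- Counting Blichfeldt: if every translate class of `s` meets at most `N` lattice
translates, then `vol s ≤ N`. -/
lemma count_blichfeldt {d : ℕ} {s : Set (Fin d → ℝ)} (hs : MeasurableSet s) {N : ℕ}
    (h : ∀ x : Fin d → ℝ, ∀ Z : Finset (Fin d → ℤ),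
      (∀ z ∈ Z, x + toR z ∈ s) → Z.card ≤ N) :
    volume s ≤ (N : ENNReal) := by
  classical
  set T : Set (Fin d → ℝ) := Set.univ.pi fun _ => Ico (0:ℝ) 1 with hTdef
  have hTmeas : MeasurableSet T := MeasurableSet.univ_pi fun i => measurableSet_Ico
  have hTvol : volume T = 1 := by
    rw [hTdef, volume_pi_pi]
    simp [Real.volume_Ico]
  set C : (Fin d → ℤ) → Set (Fin d → ℝ) := fun z => Set.univ.pi fun i => Ico (z i : ℝ) (z i + 1)
    with hCdef
  have hCmem : ∀ (z : Fin d → ℤ) (x : Fin d → ℝ), x ∈ C z ↔ ∀ i, ⌊x i⌋ = z i := by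
    intro z x
    simp only [hCdef, Set.mem_pi, Set.mem_univ, forall_true_left, Set.mem_Ico]
    constructor
    · intro hx i
      exact Int.floor_eq_iff.2 ⟨(hx i).1, (hx i).2⟩
    · intro hx i
      have := Int.floor_eq_iff.1 (hx i)
      exact ⟨this.1, this.2⟩
  have hcover : s = ⋃ z : Fin d → ℤ, s ∩ C z := by
    ext x
    simp only [Set.mem_iUnion, Set.mem_inter_iff]
    constructor
    · intro hx
      exact ⟨fun i => ⌊x i⌋, hx, (hCmem _ x).2 fun i => rfl⟩
    · rintro ⟨z, hx, -⟩; exact hx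
  have hCmeas : ∀ z, MeasurableSet (C z) := fun z =>
    MeasurableSet.univ_pi fun i => measurableSet_Ico
  have hdisj : Pairwise (Function.onFun Disjoint fun z => s ∩ C z) := by
    intro a b hab
    refine Set.disjoint_left.2 ?_
    rintro x ⟨-, hxa⟩ ⟨-, hxb⟩
    exact hab (funext fun i => ((hCmem a x).1 hxa i).symm.trans ((hCmem b x).1 hxb i))
  have hsum : volume s = ∑' z : Fin d → ℤ, volume (s ∩ C z) := by
    conv_lhs => rw [hcover]
    exact measure_iUnion hdisj fun z => hs.inter (hCmeas z)
  -- translate each piece back into T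
  set A : (Fin d → ℤ) → Set (Fin d → ℝ) := fun z => (fun x => x + toR z) ⁻¹' s with hAdef
  have hAmeas : ∀ z, MeasurableSet (A z) := fun z =>
    hs.preimage (measurable_id.add_const _)
  have htrans : ∀ z, volume (s ∩ C z) = volume (A z ∩ T) := by
    intro z
    have : (fun x => x + toR z) ⁻¹' (s ∩ C z) = A z ∩ T := by
      ext x
      simp only [Set.mem_preimage, Set.mem_inter_iff, hAdef]
      refine and_congr_right fun _ => ?_
      rw [hCmem]
      simp only [hTdef, Set.mem_pi, Set.mem_univ, forall_true_left, Set.mem_Ico]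
      constructor
      · intro hx i
        have := Int.floor_eq_iff.1 (hx i)
        simp only [Pi.add_apply, toR] at this
        constructor <;> linarith [this.1, this.2]
      · intro hx i
        refine Int.floor_eq_iff.2 ?_
        simp only [Pi.add_apply, toR]
        constructor <;> linarith [(hx i).1, (hx i).2]
    rw [← measure_preimage_add_right volume (toR z) (s ∩ C z), this]
  have hsum2 : volume s = ∑' z : Fin d → ℤ, volume (A z ∩ T) := by
    rw [hsum]; exact tsum_congr htrans
  -- rewrite as integral
  have hind : ∀ z, volume (A z ∩ T) =
      ∫⁻ x, (A z ∩ T).indicator (fun _ => (1 : ENNReal)) x := by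
    intro z
    rw [lintegral_indicator ((hAmeas z).inter hTmeas)]
    simp
  have hsum3 : volume s = ∫⁻ x, ∑' z : Fin d → ℤ, (A z ∩ T).indicator (fun _ => (1:ENNReal)) x :=
    hsum2.trans <| (tsum_congr hind).trans <|
      (lintegral_tsum fun z =>
        ((measurable_const.indicator ((hAmeas z).inter hTmeas))).aemeasurable).symm
  -- pointwise bound
  have hpt : ∀ x, (∑' z : Fin d → ℤ, (A z ∩ T).indicator (fun _ => (1:ENNReal)) x)
      ≤ T.indicator (fun _ => (N : ENNReal)) x := by
    intro x
    by_cases hxT : x ∈ T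
    · rw [Set.indicator_of_mem hxT]
      rw [ENNReal.tsum_eq_iSup_sum]
      refine iSup_le fun F => ?_
      have : ∀ z ∈ F, (A z ∩ T).indicator (fun _ => (1:ENNReal)) x
          = if x + toR z ∈ s then 1 else 0 := by
        intro z _
        by_cases hzs : x + toR z ∈ s
        · have hxA : x ∈ A z := Set.mem_preimage.2 hzs
          rw [if_pos hzs, Set.indicator_of_mem (Set.mem_inter hxA hxT)]
        · rw [if_neg hzs,
            Set.indicator_of_notMem (fun hc => hzs (Set.mem_preimage.1 hc.1))]
      rw [Finset.sum_congr rfl this, Finset.sum_ite, Finset.sum_const, Finset.sum_const]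
      simp only [smul_eq_mul, nsmul_eq_mul, mul_one, mul_zero, add_zero, smul_zero]
      have hcard : (F.filter fun z => x + toR z ∈ s).card ≤ N :=
        h x _ fun z hz => (Finset.mem_filter.1 hz).2
      exact_mod_cast Nat.cast_le.2 hcard
    · rw [Set.indicator_of_notMem hxT]
      have h0 : ∀ z : Fin d → ℤ, (A z ∩ T).indicator (fun _ => (1:ENNReal)) x = 0 := fun z =>
        Set.indicator_of_notMem (fun hc => hxT hc.2) _
      rw [tsum_congr h0, tsum_zero]
  calc volume s ≤ ∫⁻ x, T.indicator (fun _ => (N : ENNReal)) x := by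
        rw [hsum3]; exact lintegral_mono hpt
    _ = N * volume T := by rw [lintegral_indicator hTmeas]; simp [mul_comm]
    _ = N := by rw [hTvol, mul_one]

/-- van der Corput's theorem. A convex body `K ⊆ ℝ^d` centrally
symmetric about an integer point satisfies `vol(K) ≤ 2^d · |K ∩ ℤ^d|`. -/
theorem van_der_corput (d : ℕ) (K : Set (Fin d → ℝ)) (hK : IsCompact K)
    (hconv : Convex ℝ K) (hint : (interior K).Nonempty) (v : Fin d → ℤ)
    (hsym : ∀ x : Fin d → ℝ, x ∈ K ↔ (2 : ℝ) • toR v - x ∈ K) :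
    MeasureTheory.volume K ≤
      2 ^ d * ({z : Fin d → ℤ | toR z ∈ K}.ncard : ENNReal) := by
  classical
  set P : Set (Fin d → ℤ) := {z : Fin d → ℤ | toR z ∈ K} with hPdef
  -- finiteness of lattice points of K
  obtain ⟨R, hR⟩ : ∃ R : ℝ, K ⊆ Metric.closedBall 0 R :=
    hK.isBounded.subset_closedBall 0
  have hPfin : P.Finite := by
    refine (Set.finite_Icc (fun _ : Fin d => -⌈R⌉) fun _ => ⌈R⌉).subset ?_
    intro z hz
    have hnorm : ‖toR z‖ ≤ R := by
      have := hR hz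
      rwa [Metric.mem_closedBall, dist_zero_right] at this
    constructor <;> intro i
    · have h1 : |(z i : ℝ)| ≤ R := by
        have := norm_le_pi_norm (toR z) i
        rw [Real.norm_eq_abs] at this
        exact this.trans hnorm
      have : -(⌈R⌉ : ℝ) ≤ (z i : ℝ) := by
        have := Int.le_ceil R
        have h2 := (abs_le.1 h1).1
        linarith
      exact_mod_cast this
    · have h1 : |(z i : ℝ)| ≤ R := by
        have := norm_le_pi_norm (toR z) i
        rw [Real.norm_eq_abs] at this
        exact this.trans hnorm
      have : (z i : ℝ) ≤ (⌈R⌉ : ℝ) := (abs_le.1 h1).2.trans (Int.le_ceil R)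
      exact_mod_cast this
  by_contra hcon
  rw [not_le] at hcon
  set N : ℕ := P.ncard with hNdef
  set s : Set (Fin d → ℝ) := (2⁻¹ : ℝ) • K with hsdef
  have hscomp : IsCompact s := hK.smul _
  have hsmeas : MeasurableSet s := hscomp.isClosed.measurableSet
  have hKs : K = (2 : ℝ) • s := by
    rw [hsdef, smul_smul]
    norm_num
  have hfr : Module.finrank ℝ (Fin d → ℝ) = d := by
    simp [Module.finrank_fintype_fun_eq_card]
  have hvolK : MeasureTheory.volume K = 2 ^ d * MeasureTheory.volume s := by
    conv_lhs => rw [hKs]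
    rw [MeasureTheory.Measure.addHaar_smul, hfr]
    congr 1
    rw [abs_pow, abs_two, ENNReal.ofReal_pow (by norm_num)]
    norm_num
  have hNs : (N : ENNReal) < MeasureTheory.volume s := by
    rw [hvolK] at hcon
    exact lt_of_mul_lt_mul_left hcon zero_le
  -- extract many congruent points
  have hmany : ¬ (∀ x : Fin d → ℝ, ∀ Z : Finset (Fin d → ℤ),
      (∀ z ∈ Z, x + toR z ∈ s) → Z.card ≤ N) := by
    intro hall
    exact absurd (count_blichfeldt hsmeas hall) (not_le.2 hNs)
  push_neg at hmany
  obtain ⟨x, Z, hZs, hNZ⟩ := hmany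
  obtain ⟨z0, hz0⟩ : Z.Nonempty := Finset.card_pos.1 (Nat.pos_of_ne_zero fun h0 => by
    rw [h0] at hNZ; exact Nat.not_lt_zero _ hNZ)
  -- each z in Z gives a lattice point v + z - z0 of K
  have hmem : ∀ z ∈ Z, (v + z - z0) ∈ P := by
    intro z hz
    have hhalf : ∀ w ∈ Z, (2 : ℝ) • (x + toR w) ∈ K := by
      intro w hw
      have := hZs w hw
      rw [hsdef, Set.mem_smul_set_iff_inv_smul_mem₀ (by norm_num : (2⁻¹ : ℝ) ≠ 0)] at this
      simpa using this
    have h1 : (2 : ℝ) • (x + toR z) ∈ K := hhalf z hz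
    have h2 : (2 : ℝ) • toR v - (2 : ℝ) • (x + toR z0) ∈ K := (hsym _).1 (hhalf z0 hz0)
    have hmid : toR (v + z - z0) =
        (2⁻¹ : ℝ) • ((2 : ℝ) • (x + toR z)) +
          (2⁻¹ : ℝ) • ((2 : ℝ) • toR v - (2 : ℝ) • (x + toR z0)) := by
      funext i
      simp only [toR, Pi.add_apply, Pi.sub_apply, Pi.smul_apply, smul_eq_mul]
      push_cast
      ring
    have := hconv h1 h2 (by norm_num : (0:ℝ) ≤ 2⁻¹) (by norm_num : (0:ℝ) ≤ 2⁻¹)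
      (by norm_num)
    rwa [hPdef, Set.mem_setOf_eq, hmid]
  -- injectivity gives too many lattice points
  have hinj : Set.InjOn (fun z => v + z - z0) Z := fun a _ b _ hab => by
    have h' : v + a - z0 = v + b - z0 := hab
    have := congrArg (fun w => w + z0 - v) h'
    simpa [add_comm, add_left_comm, sub_eq_add_neg, add_assoc] using this
  have hsubset : ((Z.image fun z => v + z - z0 : Finset (Fin d → ℤ)) : Set (Fin d → ℤ)) ⊆ P := by
    intro w hw
    simp only [Finset.coe_image, Set.mem_image, Finset.mem_coe] at hw
    obtain ⟨z, hz, rfl⟩ := hw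
    exact hmem z hz
  have hcard : (Z.image fun z => v + z - z0).card = Z.card :=
    Finset.card_image_of_injOn hinj
  have : Z.card ≤ N := by
    rw [← hcard, ← Set.ncard_coe_finset]
    exact Set.ncard_le_ncard hsubset hPfin
  exact absurd hNZ (not_lt.2 this)
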